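/- arXiv:2202.02069 — 2 statements merged into one kernel-verified Lean document; each statement's English description precedes it below -/
import Mathlib

section
/- Let 𝒞 be an n-round abstract interactive channel and 𝕍 a vulnerability measure satisfying the healthiness conditions. If the classical 𝕍-capacity of 𝒞 is zero, then the non-signalling 𝕍-capacity of 𝒞 is also zero: 𝓛_𝕍(𝒞) = 0 ⟹ 𝓛^ns_𝕍(𝒞) = 0. -/
open scoped Classical

noncomputable section

/-- A probability vector (probability distribution) on a finite type. -/
def IsProbVector {α : Type} [Fintype α] (p : α → ℝ) : Prop :=
  (∀ a, 0 ≤ p a) ∧ ∑ a, p a = 1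

/-- A vulnerability measure: a real-valued function on probability
distributions on finite types. -/
structure VulnMeasure : Type 1 where
  V : ∀ (α : Type) [Fintype α], (α → ℝ) → ℝ

/-- The Bernoulli distribution with parameter `ρ`, as a distribution on `Bool`. -/
def Ber (ρ : ℝ) : Bool → ℝ := fun b => if b then ρ else 1 - ρ

namespace VulnMeasure

variable (𝕍 : VulnMeasure)

/-- `I_𝕍(X;Y)`: the expected increase in 𝕍-vulnerability of the posterior over
the prior, for a joint distribution `p` of `(X, Y)` on `α × β`. -/
def IV {α β : Type} [Fintype α] [Fintype β] (p : α × β → ℝ) : ℝ :=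
  (∑ b : β, (∑ a : α, p (a, b)) * 𝕍.V α (fun a => p (a, b) / ∑ a' : α, p (a', b)))
    - 𝕍.V α (fun a => ∑ b : β, p (a, b))

/-- Healthiness condition (1): the composition inequality for Markov chains
`X → Y → Z` (specified by a prior `pX` and conditional kernels `q`, `r`). -/
def CompositionInequality : Prop :=
  ∀ (α β γ : Type) [Fintype α] [Fintype β] [Fintype γ]
    (pX : α → ℝ) (q : α → β → ℝ) (r : β → γ → ℝ),
    IsProbVector pX → (∀ a, IsProbVector (q a)) → (∀ b, IsProbVector (r b)) →
    𝕍.IV (fun ac : α × γ => ∑ b : β, pX ac.1 * q ac.1 b * r b ac.2) ≤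
        sSup {v | ∃ pX' : α → ℝ, IsProbVector pX' ∧
          v = 𝕍.IV fun ab : α × β => pX' ab.1 * q ab.1 ab.2} ∧
    𝕍.IV (fun ac : α × γ => ∑ b : β, pX ac.1 * q ac.1 b * r b ac.2) ≤
        sSup {v | ∃ pY' : β → ℝ, IsProbVector pY' ∧
          v = 𝕍.IV fun bc : β × γ => pY' bc.1 * r bc.1 bc.2}

/-- Healthiness condition (2): Bernoulli distributions closer to uniform are
strictly less vulnerable. -/
def BerStrictMono : Prop :=
  ∀ ρ ρ' : ℝ, 0 ≤ ρ → ρ ≤ 1 → 0 ≤ ρ' → ρ' ≤ 1 →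
    |ρ - 1 / 2| < |ρ' - 1 / 2| → 𝕍.V Bool (Ber ρ) < 𝕍.V Bool (Ber ρ')

/-- Healthiness condition (3): a binary symmetric channel with error
probability `p` leaks at most `𝕍(Ber(1-p)) - 𝕍(Ber(1/2))`. -/
def BSCBound : Prop :=
  ∀ p : ℝ, 0 ≤ p → p ≤ 1 → ∀ pX : Bool → ℝ, IsProbVector pX →
    𝕍.IV (fun xy : Bool × Bool => pX xy.1 * (if xy.2 = xy.1 then 1 - p else p)) ≤
      𝕍.V Bool (Ber (1 - p)) - 𝕍.V Bool (Ber (1 / 2))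

/-- The three healthiness conditions for a vulnerability measure. -/
def Healthy : Prop := 𝕍.CompositionInequality ∧ 𝕍.BerStrictMono ∧ 𝕍.BSCBound

end VulnMeasure

/-- Alice's view of a single round of a trace. -/
def viewA {A B X Y : Type} (e : A × B × X × Y) : A × X := (e.1, e.2.2.1)

/-- Bob's view of a single round of a trace. -/
def viewB {A B X Y : Type} (e : A × B × X × Y) : B × Y := (e.2.1, e.2.2.2)

/-- An `n`-round abstract interactive channel (`n`-IC): at each round `i`,
given the history so far and the pair of messages sent by Alice and Bob, it
returns a probability distribution on the pair of messages sent back. -/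
structure IC (n : ℕ) (A B X Y : Type) [Fintype X] [Fintype Y] where
  f : ∀ i : Fin n, (Fin i.val → A × B × X × Y) → A × B → X × Y → ℝ
  f_prob : ∀ i h ab, IsProbVector (f i h ab)

/-- The `i`-th prefix of a trace. -/
def prefixOf {n : ℕ} {α : Type} (t : Fin n → α) (i : Fin n) : Fin i.val → α :=
  fun j => t ⟨j.val, lt_trans j.isLt i.isLt⟩

/-- Alice's view of the `i`-th prefix of a trace. -/
def aView {n : ℕ} {A B X Y : Type} (t : Fin n → A × B × X × Y) (i : Fin n) :
    Fin i.val → A × X := fun j => viewA (prefixOf t i j)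

/-- Bob's view of the `i`-th prefix of a trace. -/
def bView {n : ℕ} {A B X Y : Type} (t : Fin n → A × B × X × Y) (i : Fin n) :
    Fin i.val → B × Y := fun j => viewB (prefixOf t i j)

/-- Bob's view of a whole trace. -/
def bobView {n : ℕ} {A B X Y : Type} (t : Fin n → A × B × X × Y) : Fin n → B × Y :=
  fun i => viewB (t i)

/-- A classical (probabilistic) strategy for Alice. -/
structure AStrat (n : ℕ) (A X : Type) [Fintype A] where
  g : ∀ i : Fin n, (Fin i.val → A × X) → A → ℝ
  g_prob : ∀ i h, IsProbVector (g i h)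

/-- A classical (probabilistic) strategy for Bob. -/
structure BStrat (n : ℕ) (B Y : Type) [Fintype B] where
  g : ∀ i : Fin n, (Fin i.val → B × Y) → B → ℝ
  g_prob : ∀ i h, IsProbVector (g i h)

variable {n : ℕ} {A B X Y : Type} [Fintype A] [Fintype B] [Fintype X] [Fintype Y]

/-- The probability contributed by the channel at round `i` of trace `t`. -/
def chanStep (C : IC n A B X Y) (t : Fin n → A × B × X × Y) (i : Fin n) : ℝ :=
  C.f i (prefixOf t i) ((t i).1, (t i).2.1) ((t i).2.2.1, (t i).2.2.2)

/-- The probability of a trace under classical strategies for Alice and Bob. -/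
def traceProb (C : IC n A B X Y) (sA : AStrat n A X) (sB : BStrat n B Y)
    (t : Fin n → A × B × X × Y) : ℝ :=
  ∏ i : Fin n, sA.g i (aView t i) (t i).1 * sB.g i (bView t i) (t i).2.1 * chanStep C t i

/-- The joint distribution of the secret and Bob's view of the trace, given a
prior `pK` on secrets and trace distributions `P k`. -/
def bobJoint {K : Type} [Fintype K] (pK : K → ℝ)
    (P : K → (Fin n → A × B × X × Y) → ℝ) : K × (Fin n → B × Y) → ℝ :=
  fun kv => pK kv.1 * ∑ t : Fin n → A × B × X × Y, if bobView t = kv.2 then P kv.1 t else 0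

/-- The 𝕍-leakage to Bob : the expected posterior 𝕍-vulnerability of the
secret given Bob's view, minus the prior vulnerability. -/
def leakage (𝕍 : VulnMeasure) {K : Type} [Fintype K] (pK : K → ℝ)
    (P : K → (Fin n → A × B × X × Y) → ℝ) : ℝ :=
  𝕍.IV (bobJoint pK P)

/-- A secret: a finite set together with a prior probability distribution. -/
structure Secret : Type 1 where
  K : Type
  [fin : Fintype K]
  p : K → ℝ
  prob : IsProbVector p

attribute [instance] Secret.fin

/-- The classical 𝕍-capacity of a channel: the supremum of 𝕍-leakage over all
secrets and all classical strategies. -/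
def classicalCapacity (𝕍 : VulnMeasure) (C : IC n A B X Y) : ℝ :=
  sSup {r | ∃ (s : Secret) (φA : s.K → AStrat n A X) (sB : BStrat n B Y),
    r = leakage 𝕍 s.p fun k => traceProb C (φA k) sB}

/-- An orthogonal projective measurement with outcomes in `O` on `ℂ^d`. -/
structure ProjMeas (d : ℕ) (O : Type) [Fintype O] where
  P : O → Matrix (Fin d) (Fin d) ℂ
  herm : ∀ o, (P o).IsHermitian
  idem : ∀ o, P o * P o = P o
  orth : ∀ o o', o ≠ o' → P o * P o' = 0
  complete : ∑ o, P o = 1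

/-- A quantum joint strategy: a shared entangled state on `ℂ^{dA} ⊗ ℂ^{dB}`,
projective measurements for Alice (depending on the secret and her view) and
for Bob (depending on his view). -/
structure QStrat (n : ℕ) (K A B X Y : Type) [Fintype A] [Fintype B] where
  dA : ℕ
  dB : ℕ
  ψ : Fin dA × Fin dB → ℂ
  unit : ∑ q, Complex.normSq (ψ q) = 1
  Am : ∀ (k : K) (i : Fin n), (Fin i.val → A × X) → ProjMeas dA A
  Bm : ∀ (i : Fin n), (Fin i.val → B × Y) → ProjMeas dB B

/-- The ordered product `A^k_h` of Alice's projections along a history `h` of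
length `m` (later rounds act on the left). -/
def aliceHistProd {K : Type} (S : QStrat n K A B X Y) (k : K) {m : ℕ} (hm : m ≤ n)
    (h : Fin m → A × B × X × Y) : Matrix (Fin S.dA) (Fin S.dA) ℂ :=
  (((List.finRange m).map fun i =>
      (S.Am k ⟨i.val, lt_of_lt_of_le i.isLt hm⟩
          (fun j => viewA (h ⟨j.val, lt_trans j.isLt i.isLt⟩))).P (h i).1).reverse).prod

/-- The ordered product `B_h` of Bob's projections along a history `h`. -/
def bobHistProd {K : Type} (S : QStrat n K A B X Y) {m : ℕ} (hm : m ≤ n)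
    (h : Fin m → A × B × X × Y) : Matrix (Fin S.dB) (Fin S.dB) ℂ :=
  (((List.finRange m).map fun i =>
      (S.Bm ⟨i.val, lt_of_lt_of_le i.isLt hm⟩
          (fun j => viewB (h ⟨j.val, lt_trans j.isLt i.isLt⟩))).P (h i).2.1).reverse).prod

/-- `⟨ψ|A^k_t ⊗ B_t|ψ⟩` for a full trace `t`. -/
def qPath {K : Type} (S : QStrat n K A B X Y) (k : K) (t : Fin n → A × B × X × Y) : ℝ :=
  (dotProduct (star S.ψ)
    ((Matrix.kroneckerMap (· * ·) (aliceHistProd S k le_rfl t)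
        (bobHistProd S le_rfl t)).mulVec S.ψ)).re

/-- The probability of a trace under a quantum joint strategy. -/
def qTraceProb (C : IC n A B X Y) {K : Type} (S : QStrat n K A B X Y) (k : K)
    (t : Fin n → A × B × X × Y) : ℝ :=
  qPath S k t * ∏ i : Fin n, chanStep C t i

/-- The entangled 𝕍-capacity of a channel: the supremum of 𝕍-leakage over all
secrets and all quantum joint strategies. -/
def entCapacity (𝕍 : VulnMeasure) (C : IC n A B X Y) : ℝ :=
  sSup {r | ∃ (s : Secret) (S : QStrat n s.K A B X Y),
    r = leakage 𝕍 s.p fun k => qTraceProb C S k}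

/-- A generalised strategy: a joint (correlated) probabilistic strategy for
Alice and Bob, possibly depending on the secret. -/
structure GenStrat (n : ℕ) (K A B X Y : Type) [Fintype A] [Fintype B] where
  g : ∀ (k : K) (i : Fin n), (Fin i.val → A × B × X × Y) → A × B → ℝ
  g_prob : ∀ k i h, IsProbVector (g k i h)

/-- The non-signalling conditions for a generalised strategy. -/
def GenStrat.NonSignalling {K : Type} (S : GenStrat n K A B X Y) : Prop :=
  (∀ (k k' : K) (i : Fin n) (h h' : Fin i.val → A × B × X × Y),
      (fun j => viewB (h j)) = (fun j => viewB (h' j)) →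
      ∀ b : B, ∑ a : A, S.g k i h (a, b) = ∑ a : A, S.g k' i h' (a, b)) ∧
  (∀ (k : K) (i : Fin n) (h h' : Fin i.val → A × B × X × Y),
      (fun j => viewA (h j)) = (fun j => viewA (h' j)) →
      ∀ a : A, ∑ b : B, S.g k i h (a, b) = ∑ b : B, S.g k i h' (a, b))

/-- The probability of a trace under a generalised strategy. -/
def genTraceProb (C : IC n A B X Y) {K : Type} (S : GenStrat n K A B X Y) (k : K)
    (t : Fin n → A × B × X × Y) : ℝ :=
  ∏ i : Fin n, S.g k i (prefixOf t i) ((t i).1, (t i).2.1) * chanStep C t i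

/-- The non-signalling 𝕍-capacity of a channel: the supremum of 𝕍-leakage over
all secrets and all non-signalling generalised strategies. -/
def nsCapacity (𝕍 : VulnMeasure) (C : IC n A B X Y) : ℝ :=
  sSup {r | ∃ (s : Secret) (S : GenStrat n s.K A B X Y), S.NonSignalling ∧
    r = leakage 𝕍 s.p fun k => genTraceProb C S k}



section NonsigProof

variable {n : ℕ} {A B X Y : Type} [Fintype A] [Fintype B] [Fintype X] [Fintype Y] {K : Type}

/-! ### Generic summation lemmas -/

private def mycons {Z : Type} {m : ℕ} (z : Z) (t : Fin m → Z) : Fin (m + 1) → Z :=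
  fun j => if h : j.val = 0 then z else t ⟨j.val - 1, by have hj := j.isLt; omega⟩

private def myconsEquiv {Z : Type} {m : ℕ} : (Z × (Fin m → Z)) ≃ (Fin (m + 1) → Z) where
  toFun p := mycons p.1 p.2
  invFun u := (u ⟨0, Nat.succ_pos m⟩, fun i => u ⟨i.val + 1, by have := i.isLt; omega⟩)
  left_inv p := by
    obtain ⟨z, t⟩ := p
    refine Prod.ext ?_ ?_
    · simp [mycons]
    · funext i
      simp only [mycons]
      rw [dif_neg (Nat.succ_ne_zero i.val)]
      exact congrArg t (Fin.ext (by simp))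
  right_inv u := by
    funext j
    by_cases hj : j.val = 0
    · show mycons _ _ j = u j
      simp only [mycons, dif_pos hj]
      congr 1
      exact Fin.ext hj.symm
    · show mycons _ _ j = u j
      simp only [mycons, dif_neg hj]
      congr 1
      refine Fin.ext ?_
      have := j.isLt
      simp only []
      omega

private lemma sum_prod_kernels {Z : Type} [Fintype Z] :
    ∀ (m : ℕ) (F : ∀ i : Fin m, (Fin i.val → Z) → Z → ℝ),
      (∀ i h, ∑ z, F i h z = 1) →
      ∑ t : Fin m → Z, ∏ i, F i (prefixOf t i) (t i) = 1 := by
  intro m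
  induction m with
  | zero =>
      intro F hF
      have h1 : ∀ t : Fin 0 → Z, (∏ i, F i (prefixOf t i) (t i)) = 1 := fun t =>
        Finset.prod_of_isEmpty _
      rw [Finset.sum_congr rfl fun t _ => h1 t]
      simp
  | succ m ih =>
      intro F hF
      rw [← Equiv.sum_comp (myconsEquiv (Z := Z) (m := m)), Fintype.sum_prod_type]
      have hsplit : ∀ (z : Z) (t : Fin m → Z),
          (∏ i : Fin (m + 1), F i (prefixOf (mycons z t) i) (mycons z t i))
            = F 0 (fun j => absurd j.isLt (by simp)) z
              * ∏ i : Fin m,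
                  (fun (i : Fin m) (h : Fin i.val → Z) w => F i.succ (mycons z h) w) i
                    (prefixOf t i) (t i) := by
        intro z t
        rw [Fin.prod_univ_succ]
        congr 1
        · have h0fun : prefixOf (mycons z t) (0 : Fin (m + 1)) =
              (fun j => absurd j.isLt (by simp) : Fin ((0 : Fin (m + 1)).val) → Z) := by
            funext j
            exact absurd j.isLt (by simp)
          rw [h0fun]
          refine congrArg (F 0 _) ?_
          simp [mycons]
      calc ∑ z : Z, ∑ t : Fin m → Z,
              (fun u : Fin (m + 1) → Z => ∏ i, F i (prefixOf u i) (u i)) (myconsEquiv (z, t))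
          = ∑ z : Z, ∑ t : Fin m → Z,
              F 0 (fun j => absurd j.isLt (by simp)) z
                * ∏ i : Fin m,
                    (fun (i : Fin m) (h : Fin i.val → Z) w => F i.succ (mycons z h) w) i
                      (prefixOf t i) (t i) :=
            Finset.sum_congr rfl fun z _ => Finset.sum_congr rfl fun t _ => hsplit z t
        _ = ∑ z : Z, F 0 (fun j => absurd j.isLt (by simp)) z * 1 := by
            refine Finset.sum_congr rfl fun z _ => ?_
            rw [← Finset.mul_sum]
            congr 1
            exact ih _ (fun i h => hF i.succ (mycons z h))
        _ = 1 := by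
            simp only [mul_one]
            exact hF 0 _

private lemma sum_over_views (f : (Fin n → A × B × X × Y) → ℝ) :
    ∑ v : Fin n → B × Y, ∑ t, (if bobView t = v then f t else 0) = ∑ t, f t := by
  rw [Finset.sum_comm]
  refine Finset.sum_congr rfl fun t _ => ?_
  simp

/-! ### Decomposing traces into Alice data and Bob view -/

private def mkT (v : Fin n → B × Y) (u : (Fin n → A) × (Fin n → X)) :
    Fin n → A × B × X × Y :=
  fun i => (u.1 i, (v i).1, u.2 i, (v i).2)

private def traceEquiv :
    (((Fin n → A) × (Fin n → X)) × (Fin n → B × Y)) ≃ (Fin n → A × B × X × Y) where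
  toFun p := fun i => (p.1.1 i, (p.2 i).1, p.1.2 i, (p.2 i).2)
  invFun t := ((fun i => (t i).1, fun i => (t i).2.2.1), bobView t)
  left_inv p := rfl
  right_inv t := rfl

private lemma sum_fiber (v : Fin n → B × Y) (f : (Fin n → A × B × X × Y) → ℝ) :
    ∑ t, (if bobView t = v then f t else 0)
      = ∑ u : (Fin n → A) × (Fin n → X), f (mkT v u) := by
  rw [← Equiv.sum_comp (traceEquiv (n := n) (A := A) (B := B) (X := X) (Y := Y))
      (fun t => if bobView t = v then f t else 0),
    Fintype.sum_prod_type]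
  refine Finset.sum_congr rfl fun u _ => ?_
  calc ∑ w : Fin n → B × Y,
        (if bobView (traceEquiv (u, w)) = v then f (traceEquiv (u, w)) else 0)
      = ∑ w : Fin n → B × Y, (if w = v then f (traceEquiv (u, w)) else 0) := rfl
    _ = f (traceEquiv (u, v)) := by
        rw [Finset.sum_ite_eq' Finset.univ v fun w => f (traceEquiv (u, w))]
        simp
    _ = f (mkT v u) := rfl

/-! ### Basic probability facts -/

private lemma traceProb_nonneg (C : IC n A B X Y) (sA : AStrat n A X) (sB : BStrat n B Y)
    (t : Fin n → A × B × X × Y) : 0 ≤ traceProb C sA sB t := by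
  refine Finset.prod_nonneg fun i _ => ?_
  exact mul_nonneg (mul_nonneg ((sA.g_prob i _).1 _) ((sB.g_prob i _).1 _))
    ((C.f_prob i _ _).1 _)

private lemma traceProb_sum (C : IC n A B X Y) (sA : AStrat n A X) (sB : BStrat n B Y) :
    ∑ t, traceProb C sA sB t = 1 := by
  have key := sum_prod_kernels n
    (fun i (h : Fin i.val → A × B × X × Y) (z : A × B × X × Y) =>
      sA.g i (fun j => viewA (h j)) z.1 * sB.g i (fun j => viewB (h j)) z.2.1
        * C.f i h (z.1, z.2.1) z.2.2) ?_
  · exact key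
  · intro i h
    rw [Fintype.sum_prod_type]
    have h1 : ∀ a : A, (∑ z : B × X × Y,
        sA.g i (fun j => viewA (h j)) a * sB.g i (fun j => viewB (h j)) z.1
          * C.f i h (a, z.1) z.2)
        = sA.g i (fun j => viewA (h j)) a := by
      intro a
      rw [Fintype.sum_prod_type]
      have h2 : ∀ b : B, (∑ p : X × Y,
          sA.g i (fun j => viewA (h j)) a * sB.g i (fun j => viewB (h j)) b
            * C.f i h (a, b) p)
          = sA.g i (fun j => viewA (h j)) a * sB.g i (fun j => viewB (h j)) b := by
        intro b
        rw [← Finset.mul_sum, (C.f_prob i h (a, b)).2, mul_one]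
      rw [Finset.sum_congr rfl fun b _ => h2 b, ← Finset.mul_sum, (sB.g_prob i _).2, mul_one]
    rw [Finset.sum_congr rfl fun a _ => h1 a]
    exact (sA.g_prob i _).2

/-! ### Strategies derived from a non-signalling strategy -/

private def marginalBg (S : GenStrat n K A B X Y) (k₀ : K) (a₀ : A) (x₀ : X) :
    ∀ i : Fin n, (Fin i.val → B × Y) → B → ℝ :=
  fun i w b => ∑ a : A, S.g k₀ i (fun j => (a₀, (w j).1, x₀, (w j).2)) (a, b)

private lemma marginal_eq {S : GenStrat n K A B X Y} (hns : S.NonSignalling)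
    (k₀ : K) (a₀ : A) (x₀ : X) (k : K) (i : Fin n)
    (hh : Fin i.val → A × B × X × Y) (b : B) :
    ∑ a : A, S.g k i hh (a, b) = marginalBg S k₀ a₀ x₀ i (fun j => viewB (hh j)) b :=
  hns.1 k k₀ i hh (fun j => (a₀, (viewB (hh j)).1, x₀, (viewB (hh j)).2)) rfl b

private lemma marginalBg_nonneg (S : GenStrat n K A B X Y) (k₀ : K) (a₀ : A) (x₀ : X)
    (i : Fin n) (w : Fin i.val → B × Y) (b : B) :
    0 ≤ marginalBg S k₀ a₀ x₀ i w b :=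
  Finset.sum_nonneg fun a _ => (S.g_prob k₀ i _).1 (a, b)

private noncomputable def marginalB (S : GenStrat n K A B X Y) (k₀ : K) (a₀ : A) (x₀ : X) :
    BStrat n B Y where
  g := marginalBg S k₀ a₀ x₀
  g_prob i w := by
    constructor
    · intro b
      exact marginalBg_nonneg S k₀ a₀ x₀ i w b
    · have h := (S.g_prob k₀ i (fun j => (a₀, (w j).1, x₀, (w j).2))).2
      rw [Fintype.sum_prod_type] at h
      rw [show (∑ b, marginalBg S k₀ a₀ x₀ i w b)
          = ∑ b, ∑ a, S.g k₀ i (fun j => (a₀, (w j).1, x₀, (w j).2)) (a, b) from rfl,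
        Finset.sum_comm]
      exact h

private noncomputable def uniformA [Nonempty A] : AStrat n A X where
  g _ _ _ := (Fintype.card A : ℝ)⁻¹
  g_prob i h := by
    constructor
    · intro a; positivity
    · rw [Finset.sum_const, Finset.card_univ, nsmul_eq_mul]
      exact mul_inv_cancel₀ (Nat.cast_ne_zero.mpr Fintype.card_ne_zero)

private noncomputable def condAg (S : GenStrat n K A B X Y) (k₀ : K) (a₀ : A) (x₀ : X)
    (k : K) (v : Fin n → B × Y) : ∀ i : Fin n, (Fin i.val → A × X) → A → ℝ :=
  fun i va a =>
    if marginalBg S k₀ a₀ x₀ i (fun j => v ⟨j.val, lt_trans j.isLt i.isLt⟩) (v i).1 = 0 then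
      (Fintype.card A : ℝ)⁻¹
    else
      S.g k i (fun j => ((va j).1, (v ⟨j.val, lt_trans j.isLt i.isLt⟩).1, (va j).2,
          (v ⟨j.val, lt_trans j.isLt i.isLt⟩).2)) (a, (v i).1)
        / marginalBg S k₀ a₀ x₀ i (fun j => v ⟨j.val, lt_trans j.isLt i.isLt⟩) (v i).1

private noncomputable def condA [Nonempty A] {S : GenStrat n K A B X Y}
    (hns : S.NonSignalling) (k₀ : K) (a₀ : A) (x₀ : X) (k : K) (v : Fin n → B × Y) :
    AStrat n A X where
  g := condAg S k₀ a₀ x₀ k v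
  g_prob i va := by
    constructor
    · intro a
      unfold condAg
      split
      · positivity
      · exact div_nonneg ((S.g_prob k i _).1 _) (marginalBg_nonneg S k₀ a₀ x₀ i _ _)
    · unfold condAg
      split
      · rw [Finset.sum_const, Finset.card_univ, nsmul_eq_mul]
        exact mul_inv_cancel₀ (Nat.cast_ne_zero.mpr Fintype.card_ne_zero)
      · rename_i hβ
        rw [← Finset.sum_div,
          marginal_eq hns k₀ a₀ x₀ k i
            (fun j => ((va j).1, (v ⟨j.val, lt_trans j.isLt i.isLt⟩).1, (va j).2,
              (v ⟨j.val, lt_trans j.isLt i.isLt⟩).2)) (v i).1]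
        exact div_self hβ

/-! ### The key pointwise factorization of a non-signalling strategy -/

private lemma key_factor [Nonempty A] (C : IC n A B X Y) {S : GenStrat n K A B X Y}
    (hns : S.NonSignalling) (k₀ : K) (a₀ : A) (x₀ : X) (k : K) (v : Fin n → B × Y)
    (u : (Fin n → A) × (Fin n → X)) :
    genTraceProb C S k (mkT v u)
      = traceProb C (condA hns k₀ a₀ x₀ k v) (marginalB S k₀ a₀ x₀) (mkT v u) := by
  unfold genTraceProb traceProb
  refine Finset.prod_congr rfl fun i _ => ?_
  have hfac : S.g k i (prefixOf (mkT v u) i) ((mkT v u i).1, (mkT v u i).2.1)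
      = (condA hns k₀ a₀ x₀ k v).g i (aView (mkT v u) i) (mkT v u i).1
        * (marginalB S k₀ a₀ x₀).g i (bView (mkT v u) i) (mkT v u i).2.1 := by
    show S.g k i (prefixOf (mkT v u) i) (u.1 i, (v i).1)
      = condAg S k₀ a₀ x₀ k v i (aView (mkT v u) i) (u.1 i)
        * marginalBg S k₀ a₀ x₀ i (bView (mkT v u) i) (v i).1
    have hbv : bView (mkT v u) i = (fun j => v ⟨j.val, lt_trans j.isLt i.isLt⟩) := rfl
    have hmerge : (fun j => ((aView (mkT v u) i j).1,
        (v ⟨j.val, lt_trans j.isLt i.isLt⟩).1, (aView (mkT v u) i j).2,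
        (v ⟨j.val, lt_trans j.isLt i.isLt⟩).2)) = prefixOf (mkT v u) i := rfl
    unfold condAg
    rw [hbv]
    rw [hmerge]
    split
    · rename_i hβ
      have hsum : ∑ a : A, S.g k i (prefixOf (mkT v u) i) (a, (v i).1) = 0 := by
        rw [marginal_eq hns k₀ a₀ x₀ k i (prefixOf (mkT v u) i) (v i).1]
        exact hβ
      have hle : S.g k i (prefixOf (mkT v u) i) (u.1 i, (v i).1) ≤ 0 := by
        rw [← hsum]
        exact Finset.single_le_sum
          (fun a _ => (S.g_prob k i (prefixOf (mkT v u) i)).1 (a, (v i).1))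
          (Finset.mem_univ (u.1 i))
      have hge : 0 ≤ S.g k i (prefixOf (mkT v u) i) (u.1 i, (v i).1) :=
        (S.g_prob k i (prefixOf (mkT v u) i)).1 _
      rw [le_antisymm hle hge, hβ, mul_zero]
    · rename_i hβ
      rw [div_mul_cancel₀ _ hβ]
  rw [hfac, mul_assoc]

/-! ### Strategy-independence of Bob's view distribution (zero classical capacity) -/

private lemma claimA (C : IC n A B X Y) (𝕍 : VulnMeasure) (hmono : 𝕍.BerStrictMono)
    (hle : ∀ (s : Secret) (φA : s.K → AStrat n A X) (sB : BStrat n B Y),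
      leakage 𝕍 s.p (fun k => traceProb C (φA k) sB) ≤ 0)
    (sA sA' : AStrat n A X) (sB : BStrat n B Y) (v : Fin n → B × Y) :
    ∑ t, (if bobView t = v then traceProb C sA sB t else 0)
      = ∑ t, (if bobView t = v then traceProb C sA' sB t else 0) := by
  by_contra hne0
  set q : (Fin n → B × Y) → ℝ :=
    fun w => ∑ t, (if bobView t = w then traceProb C sA sB t else 0) with hq
  set q' : (Fin n → B × Y) → ℝ :=
    fun w => ∑ t, (if bobView t = w then traceProb C sA' sB t else 0) with hq'
  have hne : q v ≠ q' v := hne0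
  have hqnn : ∀ w, 0 ≤ q w := by
    intro w
    refine Finset.sum_nonneg fun t _ => ?_
    split
    · exact traceProb_nonneg C sA sB t
    · exact le_rfl
  have hq'nn : ∀ w, 0 ≤ q' w := by
    intro w
    refine Finset.sum_nonneg fun t _ => ?_
    split
    · exact traceProb_nonneg C sA' sB t
    · exact le_rfl
  have hq1 : ∑ w, q w = 1 := by rw [hq]; rw [sum_over_views, traceProb_sum]
  have hq'1 : ∑ w, q' w = 1 := by rw [hq']; rw [sum_over_views, traceProb_sum]
  set s : Secret := ⟨Bool, fun _ => (1 : ℝ) / 2,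
    ⟨fun _ => by norm_num, by rw [Fintype.sum_bool]; norm_num⟩⟩ with hs
  set φA : Bool → AStrat n A X := fun b => cond b sA' sA with hφA
  have hmem := hle s φA sB
  set J : Bool × (Fin n → B × Y) → ℝ :=
    bobJoint s.p fun k => traceProb C (φA k) sB with hJdef
  have hJval : ∀ (b : Bool) (w : Fin n → B × Y),
      J (b, w) = 1 / 2 * cond b (q' w) (q w) := by
    intro b w
    cases b <;> rfl
  set M : (Fin n → B × Y) → ℝ := fun w => 1 / 2 * q' w + 1 / 2 * q w with hMdef
  have hM : ∀ w, (∑ b : Bool, J (b, w)) = M w := by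
    intro w
    rw [Fintype.sum_bool, hJval, hJval]
    simp only [Bool.cond_true, Bool.cond_false, hMdef]
  have hMnn : ∀ w, 0 ≤ M w := by
    intro w
    have h1 := hqnn w
    have h2 := hq'nn w
    simp only [hMdef]
    nlinarith
  have hMsum : ∑ w, M w = 1 := by
    simp only [hMdef]
    rw [Finset.sum_add_distrib, ← Finset.mul_sum, ← Finset.mul_sum, hq1, hq'1]
    norm_num
  have hprior : (fun b : Bool => ∑ w, J (b, w)) = Ber (1 / 2) := by
    funext b
    cases b
    · show ∑ w, J (false, w) = if False then (1:ℝ)/2 else 1 - 1/2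
      rw [Finset.sum_congr rfl fun w _ => hJval false w]
      simp only [cond]
      rw [← Finset.mul_sum, hq1]
      norm_num
    · show ∑ w, J (true, w) = if True then (1:ℝ)/2 else 1 - 1/2
      rw [Finset.sum_congr rfl fun w _ => hJval true w]
      simp only [cond]
      rw [← Finset.mul_sum, hq'1]
      norm_num
  have hterm : ∀ w, M w * 𝕍.V Bool (Ber (1 / 2)) ≤
      M w * 𝕍.V Bool (fun b => J (b, w) / ∑ b' : Bool, J (b', w)) := by
    intro w
    rcases eq_or_lt_of_le (hMnn w) with hM0 | hM0
    · rw [← hM0]; simp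
    · set ρ : ℝ := (1 / 2 * q' w) / M w with hρdef
      have hpost : (fun b : Bool => J (b, w) / ∑ b' : Bool, J (b', w)) = Ber ρ := by
        funext b
        rw [hM w]
        cases b
        · show J (false, w) / M w = 1 - ρ
          rw [hJval]
          simp only [cond, hρdef]
          field_simp
          simp only [hMdef]
          ring
        · show J (true, w) / M w = ρ
          rw [hJval]
          simp only [Bool.cond_true, hρdef]
      rw [hpost]
      rcases eq_or_ne ρ (1 / 2) with hρ | hρ
      · rw [hρ]
      · refine mul_le_mul_of_nonneg_left (le_of_lt ?_) (hMnn w)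
        refine hmono (1 / 2) ρ (by norm_num) (by norm_num) ?_ ?_ ?_
        · exact div_nonneg (by have := hq'nn w; linarith) (le_of_lt hM0)
        · rw [div_le_one hM0]
          have := hqnn w
          simp only [hMdef]
          linarith
        · rw [show |(1:ℝ)/2 - 1/2| = 0 by norm_num]
          exact abs_pos.mpr (sub_ne_zero_of_ne hρ)
  have hstrict : M v * 𝕍.V Bool (Ber (1 / 2)) <
      M v * 𝕍.V Bool (fun b => J (b, v) / ∑ b' : Bool, J (b', v)) := by
    have hMv : 0 < M v := by
      rcases eq_or_lt_of_le (hMnn v) with hM0 | hM0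
      · exfalso
        simp only [hMdef] at hM0
        have hq0 : q v = 0 := by linarith [hqnn v, hq'nn v]
        have hq'0 : q' v = 0 := by linarith [hqnn v, hq'nn v]
        exact hne (by rw [hq0, hq'0])
      · exact hM0
    set ρ : ℝ := (1 / 2 * q' v) / M v with hρdef
    have hpost : (fun b : Bool => J (b, v) / ∑ b' : Bool, J (b', v)) = Ber ρ := by
      funext b
      rw [hM v]
      cases b
      · show J (false, v) / M v = 1 - ρ
        rw [hJval]
        simp only [cond, hρdef]
        field_simp
        simp only [hMdef]
        ring
      · show J (true, v) / M v = ρ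
        rw [hJval]
        simp only [Bool.cond_true, hρdef]
    rw [hpost]
    have hρne : ρ ≠ 1 / 2 := by
      intro hρeq
      apply hne
      rw [hρdef, div_eq_iff (ne_of_gt hMv)] at hρeq
      simp only [hMdef] at hρeq
      linarith
    refine mul_lt_mul_of_pos_left ?_ hMv
    refine hmono (1 / 2) ρ (by norm_num) (by norm_num) ?_ ?_ ?_
    · exact div_nonneg (by have := hq'nn v; linarith) (le_of_lt hMv)
    · rw [div_le_one hMv]
      have := hqnn v
      simp only [hMdef]
      linarith
    · rw [show |(1:ℝ)/2 - 1/2| = 0 by norm_num]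
      exact abs_pos.mpr (sub_ne_zero_of_ne hρne)
  have hpos : 0 < leakage 𝕍 s.p (fun k => traceProb C (φA k) sB) := by
    show 0 < 𝕍.IV J
    unfold VulnMeasure.IV
    rw [hprior]
    have hlt : 𝕍.V Bool (Ber (1 / 2)) <
        ∑ w, (∑ b : Bool, J (b, w)) * 𝕍.V Bool (fun b => J (b, w) / ∑ b' : Bool, J (b', w)) := by
      calc 𝕍.V Bool (Ber (1 / 2)) = ∑ w, M w * 𝕍.V Bool (Ber (1 / 2)) := by
            rw [← Finset.sum_mul, hMsum, one_mul]
        _ < ∑ w, (∑ b : Bool, J (b, w)) * 𝕍.V Bool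
              (fun b => J (b, w) / ∑ b' : Bool, J (b', w)) := by
            refine Finset.sum_lt_sum (fun w _ => ?_) ⟨v, Finset.mem_univ v, ?_⟩
            · calc M w * 𝕍.V Bool (Ber (1 / 2))
                  ≤ M w * 𝕍.V Bool (fun b => J (b, w) / ∑ b' : Bool, J (b', w)) := hterm w
                _ = (∑ b : Bool, J (b, w)) * 𝕍.V Bool
                    (fun b => J (b, w) / ∑ b' : Bool, J (b', w)) := by rw [hM w]
            · calc M v * 𝕍.V Bool (Ber (1 / 2))
                  < M v * 𝕍.V Bool (fun b => J (b, v) / ∑ b' : Bool, J (b', v)) := hstrict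
                _ = (∑ b : Bool, J (b, v)) * 𝕍.V Bool
                    (fun b => J (b, v) / ∑ b' : Bool, J (b', v)) := by rw [hM v]
    linarith
  linarith

/-! ### Product leakage is zero -/

private lemma IV_product (𝕍 : VulnMeasure) {K' β : Type} [Fintype K'] [Fintype β]
    (p : K' → ℝ) (Φ : β → ℝ) (hp : ∑ k, p k = 1) (hΦ : ∑ b, Φ b = 1) :
    𝕍.IV (fun kb : K' × β => p kb.1 * Φ kb.2) = 0 := by
  unfold VulnMeasure.IV
  have hmarg : ∀ b, (∑ k, p k * Φ b) = Φ b := by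
    intro b
    rw [← Finset.sum_mul, hp, one_mul]
  have hprior : (fun k => ∑ b, p k * Φ b) = p := by
    funext k
    rw [← Finset.mul_sum, hΦ, mul_one]
  rw [hprior]
  have hterm : ∀ b, (∑ k, p k * Φ b) * 𝕍.V K' (fun k => p k * Φ b / ∑ k', p k' * Φ b)
      = Φ b * 𝕍.V K' p := by
    intro b
    rw [hmarg b]
    by_cases hb : Φ b = 0
    · rw [hb, zero_mul, zero_mul]
    · have hpost : (fun k => p k * Φ b / Φ b) = p := by
        funext k
        rw [mul_div_assoc, div_self hb, mul_one]
      rw [hpost]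
  rw [Finset.sum_congr rfl fun b _ => hterm b, ← Finset.sum_mul, hΦ, one_mul, sub_self]

/-! ### Classical strategies as non-signalling strategies -/

private noncomputable def prodStrat (φA : K → AStrat n A X) (sB : BStrat n B Y) :
    GenStrat n K A B X Y where
  g k i h ab := (φA k).g i (fun j => viewA (h j)) ab.1 * sB.g i (fun j => viewB (h j)) ab.2
  g_prob k i h := by
    constructor
    · intro ab
      exact mul_nonneg (((φA k).g_prob i _).1 _) ((sB.g_prob i _).1 _)
    · rw [Fintype.sum_prod_type]
      have h1 : ∀ a, (∑ b, (φA k).g i (fun j => viewA (h j)) a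
            * sB.g i (fun j => viewB (h j)) b)
          = (φA k).g i (fun j => viewA (h j)) a := by
        intro a
        rw [← Finset.mul_sum, (sB.g_prob i _).2, mul_one]
      rw [Finset.sum_congr rfl fun a _ => h1 a]
      exact ((φA k).g_prob i _).2

private lemma prodStrat_ns (φA : K → AStrat n A X) (sB : BStrat n B Y) :
    (prodStrat φA sB).NonSignalling := by
  constructor
  · intro k k' i h h' heq b
    show (∑ a, (φA k).g i (fun j => viewA (h j)) a * sB.g i (fun j => viewB (h j)) b)
      = ∑ a, (φA k').g i (fun j => viewA (h' j)) a * sB.g i (fun j => viewB (h' j)) b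
    rw [← Finset.sum_mul, ← Finset.sum_mul, ((φA k).g_prob i _).2, ((φA k').g_prob i _).2,
      one_mul, one_mul, heq]
  · intro k i h h' heq a
    show (∑ b, (φA k).g i (fun j => viewA (h j)) a * sB.g i (fun j => viewB (h j)) b)
      = ∑ b, (φA k).g i (fun j => viewA (h' j)) a * sB.g i (fun j => viewB (h' j)) b
    rw [← Finset.mul_sum, ← Finset.mul_sum, (sB.g_prob i _).2, (sB.g_prob i _).2,
      mul_one, mul_one, heq]

private lemma prodStrat_traceProb (C : IC n A B X Y) (φA : K → AStrat n A X)
    (sB : BStrat n B Y) (k : K) :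
    genTraceProb C (prodStrat φA sB) k = traceProb C (φA k) sB := rfl

private lemma ns_leakage_zero (C : IC n A B X Y) (𝕍 : VulnMeasure)
    (hle : ∀ (s : Secret) (φA : s.K → AStrat n A X) (sB : BStrat n B Y),
      leakage 𝕍 s.p (fun k => traceProb C (φA k) sB) ≤ 0)
    (hmono : 𝕍.BerStrictMono) (s : Secret) (S : GenStrat n s.K A B X Y)
    (hns : S.NonSignalling) :
    leakage 𝕍 s.p (fun k => genTraceProb C S k) = 0 := by
  rcases Nat.eq_zero_or_pos n with hn | hn
  · -- zero rounds: the unique trace has probability one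
    subst hn
    have hJ : bobJoint s.p (fun k => genTraceProb C S k)
        = fun kv => s.p kv.1 * (fun _ : Fin 0 → B × Y => (1:ℝ)) kv.2 := by
      funext kv
      show s.p kv.1 * (∑ t : Fin 0 → A × B × X × Y,
          if bobView t = kv.2 then genTraceProb C S kv.1 t else 0) = s.p kv.1 * 1
      congr 1
      have h1 : ∀ t : Fin 0 → A × B × X × Y,
          (if bobView t = kv.2 then genTraceProb C S kv.1 t else 0) = 1 := by
        intro t
        rw [if_pos (Subsingleton.elim _ _)]
        exact Finset.prod_of_isEmpty _
      rw [Finset.sum_congr rfl fun t _ => h1 t]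
      simp
    show 𝕍.IV (bobJoint s.p fun k => genTraceProb C S k) = 0
    rw [hJ]
    refine IV_product 𝕍 s.p (fun _ => (1:ℝ)) s.prob.2 ?_
    simp
  · -- at least one round: all the message/channel alphabets are inhabited
    have hKne : Nonempty s.K := by
      by_contra hK
      rw [not_nonempty_iff] at hK
      have h2 := s.prob.2
      rw [Finset.univ_eq_empty, Finset.sum_empty] at h2
      norm_num at h2
    have k₀ : s.K := Classical.arbitrary s.K
    have hAB : Nonempty (A × B) := by
      by_contra hab
      rw [not_nonempty_iff] at hab
      have h2 := (S.g_prob k₀ ⟨0, hn⟩ (fun j => j.elim0)).2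
      rw [Finset.univ_eq_empty, Finset.sum_empty] at h2
      norm_num at h2
    have a₀ : A := (Classical.arbitrary (A × B)).1
    have b₀ : B := (Classical.arbitrary (A × B)).2
    have hXY : Nonempty (X × Y) := by
      by_contra hxy
      rw [not_nonempty_iff] at hxy
      have h2 := (C.f_prob ⟨0, hn⟩ (fun j => j.elim0) (a₀, b₀)).2
      rw [Finset.univ_eq_empty, Finset.sum_empty] at h2
      norm_num at h2
    have x₀ : X := (Classical.arbitrary (X × Y)).1
    haveI : Nonempty A := ⟨a₀⟩
    have hA := claimA C 𝕍 hmono hle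
    have hJ : bobJoint s.p (fun k => genTraceProb C S k)
        = fun kv => s.p kv.1 * (fun v => ∑ t, (if bobView t = v
            then traceProb C uniformA (marginalB S k₀ a₀ x₀) t else 0)) kv.2 := by
      funext kv
      show s.p kv.1 * (∑ t, if bobView t = kv.2 then genTraceProb C S kv.1 t else 0)
        = s.p kv.1 * ∑ t, (if bobView t = kv.2
            then traceProb C uniformA (marginalB S k₀ a₀ x₀) t else 0)
      congr 1
      calc (∑ t, if bobView t = kv.2 then genTraceProb C S kv.1 t else 0)
          = ∑ u : (Fin n → A) × (Fin n → X), genTraceProb C S kv.1 (mkT kv.2 u) :=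
            sum_fiber kv.2 _
        _ = ∑ u : (Fin n → A) × (Fin n → X),
              traceProb C (condA hns k₀ a₀ x₀ kv.1 kv.2) (marginalB S k₀ a₀ x₀)
                (mkT kv.2 u) :=
            Finset.sum_congr rfl fun u _ => key_factor C hns k₀ a₀ x₀ kv.1 kv.2 u
        _ = ∑ t, (if bobView t = kv.2
              then traceProb C (condA hns k₀ a₀ x₀ kv.1 kv.2)
                (marginalB S k₀ a₀ x₀) t else 0) :=
            (sum_fiber kv.2 _).symm
        _ = ∑ t, (if bobView t = kv.2
              then traceProb C uniformA (marginalB S k₀ a₀ x₀) t else 0) :=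
            hA (condA hns k₀ a₀ x₀ kv.1 kv.2) uniformA (marginalB S k₀ a₀ x₀) kv.2
    have hΦ1 : ∑ v : Fin n → B × Y, (∑ t, (if bobView t = v
        then traceProb C uniformA (marginalB S k₀ a₀ x₀) t else 0)) = 1 := by
      rw [sum_over_views, traceProb_sum]
    show 𝕍.IV (bobJoint s.p fun k => genTraceProb C S k) = 0
    rw [hJ]
    exact IV_product 𝕍 s.p (fun v => ∑ t, (if bobView t = v
      then traceProb C uniformA (marginalB S k₀ a₀ x₀) t else 0)) s.prob.2 hΦ1


end NonsigProof


set_option maxHeartbeats 4000000 in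
/-- Theorem `thm:nonsig`: for any `n`-round abstract
interactive channel and any vulnerability measure satisfying the healthiness
conditions, zero classical 𝕍-capacity implies zero non-signalling
𝕍-capacity. -/
theorem zero_classical_capacity_implies_zero_nonsignalling_capacity
    {n : ℕ} {A B X Y : Type} [Fintype A] [Fintype B] [Fintype X] [Fintype Y]
    (C : IC n A B X Y) (𝕍 : VulnMeasure) (h𝕍 : 𝕍.Healthy)
    (h : classicalCapacity 𝕍 C = 0) :
    nsCapacity 𝕍 C = 0 := by
  classical
  by_cases hbdd : BddAbove {r | ∃ (s : Secret) (S : GenStrat n s.K A B X Y), S.NonSignalling ∧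
      r = leakage 𝕍 s.p fun k => genTraceProb C S k}
  · have hsub : {r | ∃ (s : Secret) (φA : s.K → AStrat n A X) (sB : BStrat n B Y),
        r = leakage 𝕍 s.p fun k => traceProb C (φA k) sB} ⊆
        {r | ∃ (s : Secret) (S : GenStrat n s.K A B X Y), S.NonSignalling ∧
        r = leakage 𝕍 s.p fun k => genTraceProb C S k} := by
      rintro r ⟨s, φA, sB, rfl⟩
      exact ⟨s, prodStrat φA sB, prodStrat_ns φA sB, rfl⟩
    have hclassbdd : BddAbove {r | ∃ (s : Secret) (φA : s.K → AStrat n A X)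
        (sB : BStrat n B Y), r = leakage 𝕍 s.p fun k => traceProb C (φA k) sB} :=
      BddAbove.mono hsub hbdd
    have hle : ∀ (s : Secret) (φA : s.K → AStrat n A X) (sB : BStrat n B Y),
        leakage 𝕍 s.p (fun k => traceProb C (φA k) sB) ≤ 0 := by
      intro s φA sB
      have hmem : leakage 𝕍 s.p (fun k => traceProb C (φA k) sB) ∈
          {r | ∃ (s : Secret) (φA : s.K → AStrat n A X) (sB : BStrat n B Y),
            r = leakage 𝕍 s.p fun k => traceProb C (φA k) sB} := ⟨s, φA, sB, rfl⟩
      calc leakage 𝕍 s.p (fun k => traceProb C (φA k) sB)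
          ≤ sSup {r | ∃ (s : Secret) (φA : s.K → AStrat n A X) (sB : BStrat n B Y),
            r = leakage 𝕍 s.p fun k => traceProb C (φA k) sB} := le_csSup hclassbdd hmem
        _ = 0 := h
    have hzero : ∀ r ∈ {r | ∃ (s : Secret) (S : GenStrat n s.K A B X Y), S.NonSignalling ∧
        r = leakage 𝕍 s.p fun k => genTraceProb C S k}, r = 0 := by
      rintro r ⟨s, S, hns, rfl⟩
      exact ns_leakage_zero C 𝕍 hle h𝕍.2.1 s S hns
    rcases Set.eq_empty_or_nonempty {r | ∃ (s : Secret) (S : GenStrat n s.K A B X Y),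
        S.NonSignalling ∧ r = leakage 𝕍 s.p fun k => genTraceProb C S k} with he | hne
    · show sSup _ = 0
      rw [he, Real.sSup_empty]
    · refine le_antisymm (csSup_le hne fun r hr => (hzero r hr).le) ?_
      obtain ⟨r, hr⟩ := hne
      calc (0:ℝ) = r := (hzero r hr).symm
        _ ≤ sSup _ := le_csSup hbdd hr
  · exact Real.sSup_of_not_bddAbove hbdd


end
end

section
/- For the CHSH game 𝔊_CHSH, the entangled value satisfies val*(𝔊_CHSH) ≥ cos²(π/8) ≈ 0.85, while the classical value equals val(𝔊_CHSH) = 3/4; in particular val*(𝔊_CHSH) > val(𝔊_CHSH). -/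
open scoped Classical

noncomputable section

variable {n : ℕ} {A B X Y : Type} [Fintype A] [Fintype B] [Fintype X] [Fintype Y]

/-- A two-player one-round non-local game: questions drawn from `QA × QB`
according to `μ`, answers in `AA`, `AB`, decision function `D`. -/
structure Game (QA QB AA AB : Type) [Fintype QA] [Fintype QB] [Fintype AA] [Fintype AB] where
  μ : QA × QB → ℝ
  μ_prob : IsProbVector μ
  D : QA → QB → AA → AB → Bool

/-- A quantum strategy for a non-local game. -/
structure GQStrat (QA QB AA AB : Type) [Fintype AA] [Fintype AB] where
  dA : ℕ
  dB : ℕ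
  ψ : Fin dA × Fin dB → ℂ
  unit : ∑ q, Complex.normSq (ψ q) = 1
  Am : QA → ProjMeas dA AA
  Bm : QB → ProjMeas dB AB

variable {QA QB AA AB : Type} [Fintype QA] [Fintype QB] [Fintype AA] [Fintype AB]

/-- The winning probability of a quantum strategy in a game. -/
def GQStrat.val (G : Game QA QB AA AB) (S : GQStrat QA QB AA AB) : ℝ :=
  ∑ q : QA × QB, ∑ x : AA, ∑ y : AB,
    G.μ q *
      (dotProduct (star S.ψ)
        ((Matrix.kroneckerMap (· * ·) ((S.Am q.1).P x) ((S.Bm q.2).P y)).mulVec S.ψ)).re *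
      (if G.D q.1 q.2 x y then 1 else 0)

/-- The entangled value of a game: the supremum of winning probabilities of
quantum strategies. -/
def Game.entValue (G : Game QA QB AA AB) : ℝ :=
  sSup {v | ∃ S : GQStrat QA QB AA AB, v = GQStrat.val G S}

/-- The classical value of a game: the supremum of winning probabilities of
classical (local probabilistic) strategies. -/
def Game.classicalValue (G : Game QA QB AA AB) : ℝ :=
  sSup {v | ∃ (f : QA → AA → ℝ) (g : QB → AB → ℝ),
    (∀ q, IsProbVector (f q)) ∧ (∀ q, IsProbVector (g q)) ∧
    v = ∑ q : QA × QB, ∑ x : AA, ∑ y : AB,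
      G.μ q * f q.1 x * g q.2 y * (if G.D q.1 q.2 x y then 1 else 0)}

/-- The non-signalling value of a game: the supremum of winning probabilities
over all non-signalling behaviours. -/
def Game.nsValue (G : Game QA QB AA AB) : ℝ :=
  sSup {v | ∃ P : QA → QB → (AA × AB → ℝ),
    (∀ a b, IsProbVector (P a b)) ∧
    (∀ a b b' x, ∑ y : AB, P a b (x, y) = ∑ y : AB, P a b' (x, y)) ∧
    (∀ a a' b y, ∑ x : AA, P a b (x, y) = ∑ x : AA, P a' b (x, y)) ∧
    v = ∑ q : QA × QB, ∑ xy : AA × AB,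
      G.μ q * P q.1 q.2 xy * (if G.D q.1 q.2 xy.1 xy.2 then 1 else 0)}

/-- The CHSH game. -/
def CHSHGame : Game Bool Bool Bool Bool where
  μ := fun _ => 1 / 4
  μ_prob := by
    constructor
    · intro q; norm_num
    · simp [Finset.sum_const, Finset.card_univ]
  D := fun a b x y => xor x y == (a && b)

-- auxiliary lemmas
open scoped ComplexOrder Kronecker

open Matrix in
lemma kron_conjT {d e : ℕ} (A : Matrix (Fin d) (Fin d) ℂ) (B : Matrix (Fin e) (Fin e) ℂ) :
    (A ⊗ₖ B)ᴴ = Aᴴ ⊗ₖ Bᴴ := by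
  ext ⟨i,j⟩ ⟨k,l⟩
  simp [conjTranspose_apply, kroneckerMap_apply, StarMul.star_mul, mul_comm]

open Matrix in
lemma kron_proj_posSemidef {d e : ℕ} {A : Matrix (Fin d) (Fin d) ℂ} {B : Matrix (Fin e) (Fin e) ℂ}
    (hA : A.IsHermitian) (hA2 : A * A = A) (hB : B.IsHermitian) (hB2 : B * B = B) :
    (A ⊗ₖ B).PosSemidef := by
  have h : (A ⊗ₖ B)ᴴ * (A ⊗ₖ B) = A ⊗ₖ B := by
    rw [kron_conjT, hA.eq, hB.eq, ← mul_kronecker_mul, hA2, hB2]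
  rw [← h]
  exact posSemidef_conjTranspose_mul_self _

open Matrix in
lemma kron_sum_eq {d e : ℕ} {X Y : Type} [Fintype X] [Fintype Y]
    (A : X → Matrix (Fin d) (Fin d) ℂ) (B : Y → Matrix (Fin e) (Fin e) ℂ) :
    ∑ x, ∑ y, (A x ⊗ₖ B y) = (∑ x, A x) ⊗ₖ (∑ y, B y) := by
  ext ⟨i,j⟩ ⟨k,l⟩
  simp [kroneckerMap_apply, Matrix.sum_apply, Finset.sum_mul_sum]

open Matrix in
lemma dot_sum {d : Type} [Fintype d] {X : Type} [Fintype X] (ψ : d → ℂ) (M : X → Matrix d d ℂ) :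
    ∑ x, star ψ ⬝ᵥ (M x) *ᵥ ψ = star ψ ⬝ᵥ (∑ x, M x) *ᵥ ψ := by
  simp only [dotProduct, Matrix.mulVec, Matrix.sum_apply, Finset.mul_sum, Finset.sum_mul]
  rw [Finset.sum_comm]
  exact Finset.sum_congr rfl fun y _ => Finset.sum_comm

open Matrix in
lemma dot_self_eq_one {d : Type} [Fintype d] (ψ : d → ℂ) (h : ∑ q, Complex.normSq (ψ q) = 1) :
    star ψ ⬝ᵥ ψ = 1 := by
  have : star ψ ⬝ᵥ ψ = ((∑ q, Complex.normSq (ψ q) : ℝ) : ℂ) := by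
    push_cast
    simp [dotProduct, mul_comm, Complex.normSq_eq_conj_mul_self]
  rw [this, h, Complex.ofReal_one]

open Matrix in
lemma qval_le_one {QA QB AA AB : Type} [Fintype QA] [Fintype QB] [Fintype AA] [Fintype AB]
    (G : Game QA QB AA AB) (S : GQStrat QA QB AA AB) : GQStrat.val G S ≤ 1 := by
  have hE0 : ∀ (q : QA × QB) (x : AA) (y : AB),
      0 ≤ (star S.ψ ⬝ᵥ ((S.Am q.1).P x ⊗ₖ (S.Bm q.2).P y) *ᵥ S.ψ).re := by
    intro q x y
    exact (kron_proj_posSemidef ((S.Am q.1).herm x) ((S.Am q.1).idem x)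
      ((S.Bm q.2).herm y) ((S.Bm q.2).idem y)).re_dotProduct_nonneg S.ψ
  have hE1 : ∀ q : QA × QB,
      ∑ x : AA, ∑ y : AB, (star S.ψ ⬝ᵥ ((S.Am q.1).P x ⊗ₖ (S.Bm q.2).P y) *ᵥ S.ψ).re = 1 := by
    intro q
    have h2 : ∑ x : AA, ∑ y : AB, star S.ψ ⬝ᵥ ((S.Am q.1).P x ⊗ₖ (S.Bm q.2).P y) *ᵥ S.ψ
        = star S.ψ ⬝ᵥ S.ψ := by
      calc ∑ x : AA, ∑ y : AB, star S.ψ ⬝ᵥ ((S.Am q.1).P x ⊗ₖ (S.Bm q.2).P y) *ᵥ S.ψ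
          = ∑ x : AA, star S.ψ ⬝ᵥ (∑ y, ((S.Am q.1).P x ⊗ₖ (S.Bm q.2).P y)) *ᵥ S.ψ :=
            Finset.sum_congr rfl fun x _ => dot_sum _ _
        _ = star S.ψ ⬝ᵥ (∑ x, ∑ y, ((S.Am q.1).P x ⊗ₖ (S.Bm q.2).P y)) *ᵥ S.ψ := dot_sum _ _
        _ = star S.ψ ⬝ᵥ ((1 : Matrix (Fin S.dA) (Fin S.dA) ℂ) ⊗ₖ (1 : Matrix (Fin S.dB) (Fin S.dB) ℂ)) *ᵥ S.ψ := by
            rw [kron_sum_eq, (S.Am q.1).complete, (S.Bm q.2).complete]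
        _ = star S.ψ ⬝ᵥ S.ψ := by rw [one_kronecker_one, one_mulVec]
    simp only [← Complex.re_sum]
    rw [h2, dot_self_eq_one S.ψ S.unit]
    simp
  have hμ := G.μ_prob
  calc GQStrat.val G S
      ≤ ∑ q : QA × QB, ∑ x : AA, ∑ y : AB,
          G.μ q * (star S.ψ ⬝ᵥ ((S.Am q.1).P x ⊗ₖ (S.Bm q.2).P y) *ᵥ S.ψ).re := by
        apply Finset.sum_le_sum; intro q _
        apply Finset.sum_le_sum; intro x _
        apply Finset.sum_le_sum; intro y _
        have h1 : (if G.D q.1 q.2 x y then (1:ℝ) else 0) ≤ 1 := by split <;> norm_num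
        have h0 : 0 ≤ G.μ q * (star S.ψ ⬝ᵥ ((S.Am q.1).P x ⊗ₖ (S.Bm q.2).P y) *ᵥ S.ψ).re :=
          mul_nonneg (hμ.1 q) (hE0 q x y)
        calc G.μ q * (star S.ψ ⬝ᵥ ((S.Am q.1).P x ⊗ₖ (S.Bm q.2).P y) *ᵥ S.ψ).re *
              (if G.D q.1 q.2 x y then (1:ℝ) else 0)
            ≤ G.μ q * (star S.ψ ⬝ᵥ ((S.Am q.1).P x ⊗ₖ (S.Bm q.2).P y) *ᵥ S.ψ).re * 1 :=
              mul_le_mul_of_nonneg_left h1 h0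
          _ = _ := mul_one _
    _ = ∑ q : QA × QB, G.μ q := by
        apply Finset.sum_congr rfl; intro q _
        rw [show ∑ x : AA, ∑ y : AB,
            G.μ q * (star S.ψ ⬝ᵥ ((S.Am q.1).P x ⊗ₖ (S.Bm q.2).P y) *ᵥ S.ψ).re
            = G.μ q * ∑ x : AA, ∑ y : AB,
              (star S.ψ ⬝ᵥ ((S.Am q.1).P x ⊗ₖ (S.Bm q.2).P y) *ᵥ S.ψ).re by
          rw [Finset.mul_sum]; exact Finset.sum_congr rfl fun x _ => (Finset.mul_sum _ _ _).symm]
        rw [hE1 q, mul_one]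
    _ = 1 := hμ.2
noncomputable def projv (c s : ℝ) : Matrix (Fin 2) (Fin 2) ℂ :=
  !![((c*c : ℝ) : ℂ), ((c*s : ℝ) : ℂ); ((c*s : ℝ) : ℂ), ((s*s : ℝ) : ℂ)]

lemma projv_herm (c s : ℝ) : (projv c s).IsHermitian := by
  rw [Matrix.IsHermitian]
  ext i j
  fin_cases i <;> fin_cases j <;>
    simp [projv, Matrix.conjTranspose_apply, mul_comm]

lemma projv_idem {c s : ℝ} (h : c^2 + s^2 = 1) : projv c s * projv c s = projv c s := by
  ext i j
  fin_cases i <;> fin_cases j <;>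
    · simp [projv, Matrix.mul_apply, Fin.sum_univ_two]
      norm_cast
      first
      | linear_combination c^2 * h
      | linear_combination c*s * h
      | linear_combination s^2 * h

lemma projv_orth {c s c' s' : ℝ} (h : c*c' + s*s' = 0) : projv c s * projv c' s' = 0 := by
  ext i j
  fin_cases i <;> fin_cases j <;>
    · simp [projv, Matrix.mul_apply, Fin.sum_univ_two]
      norm_cast
      first
      | linear_combination c*c' * h
      | linear_combination c*s' * h
      | linear_combination s*c' * h
      | linear_combination s*s' * h

lemma projv_complete {c s : ℝ} (h : c^2 + s^2 = 1) : projv c s + projv s (-c) = 1 := by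
  ext i j
  fin_cases i <;> fin_cases j <;>
    · simp [projv, Matrix.one_apply]
      norm_cast
      first
      | linear_combination h
      | linear_combination (0:ℝ) * h
noncomputable def bmeas (θ : ℝ) : ProjMeas 2 Bool where
  P := fun o => if o then projv (Real.cos θ) (Real.sin θ) else projv (Real.sin θ) (-Real.cos θ)
  herm := by
    intro o; cases o <;> simp only [if_true, if_false, Bool.false_eq_true] <;> exact projv_herm _ _
  idem := by
    intro o
    have h := Real.sin_sq_add_cos_sq θ
    cases o <;> simp only [if_true, if_false, Bool.false_eq_true]
    · exact projv_idem (by nlinarith)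
    · exact projv_idem (by nlinarith)
  orth := by
    intro o o' ho
    cases o <;> cases o' <;> simp_all <;>
      [skip; skip] <;> exact projv_orth (by ring)
  complete := by
    have h := Real.sin_sq_add_cos_sq θ
    rw [Fintype.sum_bool]
    simp only [if_true, if_false, Bool.false_eq_true]
    exact projv_complete (by nlinarith)

noncomputable def bellψ : Fin 2 × Fin 2 → ℂ :=
  fun p => if p.1 = p.2 then (((Real.sqrt 2)⁻¹ : ℝ) : ℂ) else 0

lemma bell_unit : ∑ q, Complex.normSq (bellψ q) = 1 := by
  rw [Fintype.sum_prod_type]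
  simp [bellψ, Fin.sum_univ_two, Complex.normSq_ofReal]
  norm_num

open Matrix Kronecker in
lemma bell_E (c s c' s' : ℝ) :
    (dotProduct (star bellψ) ((projv c s ⊗ₖ projv c' s') *ᵥ bellψ)).re
      = (c*c' + s*s')^2 / 2 := by
  have h2 : ((Real.sqrt 2)⁻¹ : ℝ)^2 = 1/2 := by
    rw [← Real.sqrt_inv, Real.sq_sqrt (by norm_num)]; norm_num
  rw [dotProduct, Fintype.sum_prod_type]
  simp only [Matrix.mulVec, dotProduct, Fintype.sum_prod_type, Fin.sum_univ_two,
    Matrix.kroneckerMap_apply, bellψ, projv]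
  norm_num [Pi.star_apply, RCLike.star_def, Complex.conj_ofReal]
  norm_num [bellψ, Complex.ofReal_re]
  have h : Real.sqrt 2 * Real.sqrt 2 = 2 := Real.mul_self_sqrt (by norm_num)
  linear_combination ((c*c'+s*s')^2/4) * h
noncomputable def chshQ : GQStrat Bool Bool Bool Bool where
  dA := 2
  dB := 2
  ψ := bellψ
  unit := bell_unit
  Am := fun a => bmeas (if a then Real.pi/4 else 0)
  Bm := fun b => bmeas (if b then -(Real.pi/8) else Real.pi/8)

lemma chshQ_val : GQStrat.val CHSHGame chshQ = Real.cos (Real.pi/8)^2 := by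
  have hP : ∀ (θ : ℝ) (x : Bool), (bmeas θ).P x =
      if x then projv (Real.cos θ) (Real.sin θ)
      else projv (Real.sin θ) (-Real.cos θ) := fun _ _ => rfl
  have hAm : ∀ a : Bool, chshQ.Am a = bmeas (if a then Real.pi/4 else 0) := fun _ => rfl
  have hBm : ∀ b : Bool, chshQ.Bm b = bmeas (if b then -(Real.pi/8) else Real.pi/8) :=
    fun _ => rfl
  have hψ : chshQ.ψ = bellψ := rfl
  have hdA : chshQ.dA = 2 := rfl
  have hdB : chshQ.dB = 2 := rfl
  have hc4 : Real.cos (Real.pi/4) = 2 * Real.cos (Real.pi/8)^2 - 1 := by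
    rw [show (Real.pi/4 : ℝ) = 2*(Real.pi/8) by ring, Real.cos_two_mul]
  have hs4 : Real.sin (Real.pi/4) = 2 * Real.sin (Real.pi/8) * Real.cos (Real.pi/8) := by
    rw [show (Real.pi/4 : ℝ) = 2*(Real.pi/8) by ring, Real.sin_two_mul]
  have hpy := Real.sin_sq_add_cos_sq (Real.pi/8)
  rw [GQStrat.val, Fintype.sum_prod_type]
  unfold chshQ CHSHGame bmeas
  dsimp only
  norm_num [-Real.cos_pi_div_eight, -Real.sin_pi_div_eight]
  simp only [bell_E]
  have hr : Real.sqrt 2 * Real.sqrt 2 = 2 := Real.mul_self_sqrt (by norm_num)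
  have hA : 2*Real.cos (Real.pi/8)^2 - 1 = Real.sqrt 2/2 := by
    rw [← hc4, Real.cos_pi_div_four]
  have hB : 2*Real.sin (Real.pi/8)*Real.cos (Real.pi/8) = Real.sqrt 2/2 := by
    rw [← hs4, Real.sin_pi_div_four]
  linear_combination (Real.sqrt 2 * Real.sqrt 2/8) * hpy + (Real.sqrt 2*Real.sqrt 2/8) * hB
    + (-1/4) * hA + (1/8 + Real.sqrt 2/16) * hr
lemma chsh_classical_eq : CHSHGame.classicalValue = 3/4 := by
  apply IsGreatest.csSup_eq
  constructor
  · refine ⟨fun _ x => if x then 0 else 1, fun _ y => if y then 0 else 1, ?_, ?_, ?_⟩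
    · intro q
      constructor
      · intro a; dsimp only; split <;> norm_num
      · rw [Fintype.sum_bool]; norm_num
    · intro q
      constructor
      · intro a; dsimp only; split <;> norm_num
      · rw [Fintype.sum_bool]; norm_num
    · rw [Fintype.sum_prod_type]
      simp only [Fintype.sum_bool]
      norm_num [CHSHGame]
  · rintro v ⟨f, g, hf, hg, rfl⟩
    have hf1 : ∀ q, f q true + f q false = 1 := by
      intro q; have := (hf q).2; rwa [Fintype.sum_bool] at this
    have hg1 : ∀ q, g q true + g q false = 1 := by
      intro q; have := (hg q).2; rwa [Fintype.sum_bool] at this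
    have hft := fun q => (hf q).1 true
    have hff := fun q => (hf q).1 false
    have hgt := fun q => (hg q).1 true
    have hgf := fun q => (hg q).1 false
    rw [Fintype.sum_prod_type]
    simp only [Fintype.sum_bool]
    norm_num [CHSHGame]
    have eA : f false false = 1 - f false true := by linarith [hf1 false]
    have eB : f true false = 1 - f true true := by linarith [hf1 true]
    have eC : g false false = 1 - g false true := by linarith [hg1 false]
    have eD : g true false = 1 - g true true := by linarith [hg1 true]
    rw [eA, eB, eC, eD]
    have nA : 0 ≤ 1 - f false true := by have := hff false; linarith
    have nB : 0 ≤ 1 - f true true := by have := hff true; linarith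
    have nC : 0 ≤ 1 - g false true := by have := hgf false; linarith
    have nD : 0 ≤ 1 - g true true := by have := hgf true; linarith
    nlinarith [mul_nonneg (mul_nonneg (mul_nonneg (hft false) (hft true)) (hgt false)) (hgt true),
      mul_nonneg (mul_nonneg (mul_nonneg (hft false) (hft true)) (hgt false)) (nD),
      mul_nonneg (mul_nonneg (mul_nonneg (hft false) (hft true)) (nC)) (hgt true),
      mul_nonneg (mul_nonneg (mul_nonneg (hft false) (hft true)) (nC)) (nD),
      mul_nonneg (mul_nonneg (mul_nonneg (hft false) (nB)) (hgt false)) (hgt true),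
      mul_nonneg (mul_nonneg (mul_nonneg (hft false) (nB)) (hgt false)) (nD),
      mul_nonneg (mul_nonneg (mul_nonneg (hft false) (nB)) (nC)) (hgt true),
      mul_nonneg (mul_nonneg (mul_nonneg (hft false) (nB)) (nC)) (nD),
      mul_nonneg (mul_nonneg (mul_nonneg (nA) (hft true)) (hgt false)) (hgt true),
      mul_nonneg (mul_nonneg (mul_nonneg (nA) (hft true)) (hgt false)) (nD),
      mul_nonneg (mul_nonneg (mul_nonneg (nA) (hft true)) (nC)) (hgt true),
      mul_nonneg (mul_nonneg (mul_nonneg (nA) (hft true)) (nC)) (nD),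
      mul_nonneg (mul_nonneg (mul_nonneg (nA) (nB)) (hgt false)) (hgt true),
      mul_nonneg (mul_nonneg (mul_nonneg (nA) (nB)) (hgt false)) (nD),
      mul_nonneg (mul_nonneg (mul_nonneg (nA) (nB)) (nC)) (hgt true),
      mul_nonneg (mul_nonneg (mul_nonneg (nA) (nB)) (nC)) (nD)]
/-- Proposition `prop:CHSH`: the entangled value of the CHSH
game is at least `cos²(π/8) ≈ 0.85`, its classical value is exactly `3/4`, and
in particular the entangled value strictly exceeds the classical value. -/
theorem chsh_game_values :
    Real.cos (Real.pi / 8) ^ 2 ≤ CHSHGame.entValue ∧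
    CHSHGame.classicalValue = 3 / 4 ∧
    CHSHGame.classicalValue < CHSHGame.entValue := by
  have hbdd : BddAbove {v | ∃ S : GQStrat Bool Bool Bool Bool, v = GQStrat.val CHSHGame S} := by
    refine ⟨1, ?_⟩
    rintro v ⟨S, rfl⟩
    exact qval_le_one _ _
  have h1 : Real.cos (Real.pi / 8) ^ 2 ≤ CHSHGame.entValue :=
    le_csSup hbdd ⟨chshQ, chshQ_val.symm⟩
  have hs2 : (1:ℝ) < Real.sqrt 2 := by
    nlinarith [Real.sq_sqrt (show (0:ℝ) ≤ 2 by norm_num), Real.sqrt_nonneg 2]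
  have h3 : (3/4 : ℝ) < Real.cos (Real.pi / 8) ^ 2 := by
    rw [Real.cos_sq, show (2:ℝ) * (Real.pi/8) = Real.pi/4 by ring, Real.cos_pi_div_four]
    linarith
  exact ⟨h1, chsh_classical_eq, chsh_classical_eq ▸ lt_of_lt_of_le h3 h1⟩

end
end
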